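/- If Δ ⊆ 𝔽₂⁴ is a block for the action of Aut(AQ_4) on the vertices of the augmented cube graph AQ_4 with 0000 ∈ Δ and 1 < |Δ| < 16, then Δ is one of the following three sets: {0000, 0100}; {0000, 0100, 0011, 0111}; or {0000, 0100, 0011, 0111, 1001, 1010, 1101, 1110}. -/

import Mathlib

/-- The standard basis vector `e_j` of `𝔽₂ⁿ`. -/
def stdBasis (n : ℕ) (j : Fin n) : Fin n → ZMod 2 := fun i => if i = j then 1 else 0

/-- The vector `v_k` of `𝔽₂ⁿ` having `1` in its last `k` coordinates and `0` elsewhere. -/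
def lastOnes (n k : ℕ) : Fin n → ZMod 2 := fun i => if n - k ≤ i.val then 1 else 0

/-- The generating set `S_n` of the augmented cube. -/
def genSet (n : ℕ) : Set (Fin n → ZMod 2) :=
  {x | (∃ j : Fin n, x = stdBasis n j) ∨ ∃ k : ℕ, 2 ≤ k ∧ k ≤ n ∧ x = lastOnes n k}

/-- The augmented cube graph `AQ_n`. -/
def AQ (n : ℕ) : SimpleGraph (Fin n → ZMod 2) where
  Adj x y := x ≠ y ∧ x + y ∈ genSet n
  symm := ⟨fun x y h => ⟨h.1.symm, by rw [add_comm]; exact h.2⟩⟩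
  loopless := ⟨fun x h => h.1 rfl⟩


abbrev V4 := Fin 4 → ZMod 2

def genList : List V4 :=
  [![1,0,0,0], ![0,1,0,0], ![0,0,1,0], ![0,0,0,1], ![0,0,1,1], ![0,1,1,1], ![1,1,1,1]]

lemma genSet4_iff (x : V4) : x ∈ genSet 4 ↔ x ∈ genList := by
  constructor
  · rintro (⟨j, rfl⟩ | ⟨k, hk2, hk4, rfl⟩)
    · fin_cases j <;> decide
    · interval_cases k <;> decide
  · intro h
    simp only [genList, List.mem_cons, List.not_mem_nil, or_false] at h
    rcases h with rfl|rfl|rfl|rfl|rfl|rfl|rfl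
    · exact Or.inl ⟨0, by decide⟩
    · exact Or.inl ⟨1, by decide⟩
    · exact Or.inl ⟨2, by decide⟩
    · exact Or.inl ⟨3, by decide⟩
    · exact Or.inr ⟨2, by norm_num, by norm_num, by decide⟩
    · exact Or.inr ⟨3, by norm_num, by norm_num, by decide⟩
    · exact Or.inr ⟨4, by norm_num, by norm_num, by decide⟩

lemma adj_iff (x y : V4) : (AQ 4).Adj x y ↔ (x ≠ y ∧ x + y ∈ genList) :=
  and_congr_right fun _ => genSet4_iff _

lemma v4_add_self (a : V4) : a + a = 0 := funext fun i => CharTwo.add_self_eq_zero (a i)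

/-- Translation by `a` as a graph automorphism of `AQ 4`. -/
def trAut (a : V4) : AQ 4 ≃g AQ 4 where
  toFun := (· + a)
  invFun := (· + a)
  left_inv := fun x => by simp [add_assoc, v4_add_self]
  right_inv := fun x => by simp [add_assoc, v4_add_self]
  map_rel_iff' := by
    intro x y
    simp only [Equiv.coe_fn_mk]
    rw [adj_iff, adj_iff]
    exact and_congr (add_left_injective a).ne_iff
      (by rw [show x + a + (y + a) = x + y + (a + a) by ring, v4_add_self, add_zero])

lemma trAut_apply (a x : V4) : trAut a x = x + a := rfl

def gFun : V4 → V4 := fun x => ![x 2 + x 3, x 1 + x 3, x 3, x 0 + x 3]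
def gInv : V4 → V4 := fun x => ![x 2 + x 3, x 1 + x 2, x 0 + x 2, x 2]

/-- A linear graph automorphism of `AQ 4`. -/
def gAut : AQ 4 ≃g AQ 4 where
  toFun := gFun
  invFun := gInv
  left_inv := by decide
  right_inv := by decide
  map_rel_iff' := by
    intro x y
    simp only [Equiv.coe_fn_mk]
    rw [adj_iff, adj_iff]
    exact (by decide : ∀ a b : V4,
      ((gFun a ≠ gFun b ∧ gFun a + gFun b ∈ genList) ↔ (a ≠ b ∧ a + b ∈ genList))) x y

lemma gAut_apply (x : V4) : gAut x = gFun x := rfl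

lemma all16 (x : V4) :
    x = ![0,0,0,0] ∨ x = ![1,0,0,0] ∨ x = ![0,1,0,0] ∨ x = ![0,0,1,0] ∨ x = ![0,0,0,1] ∨
    x = ![0,0,1,1] ∨ x = ![0,1,1,1] ∨ x = ![1,1,1,1] ∨ x = ![0,1,0,1] ∨ x = ![0,1,1,0] ∨
    x = ![1,0,1,1] ∨ x = ![1,1,0,0] ∨ x = ![1,0,0,1] ∨ x = ![1,0,1,0] ∨ x = ![1,1,0,1] ∨
    x = ![1,1,1,0] := by
  revert x; decide

set_option maxHeartbeats 2000000 in
/-- The only nontrivial blocks of `Aut(AQ_4)` acting on the vertices of `AQ_4`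
that contain the zero vertex are `{0000, 0100}`, `{0000, 0100, 0011, 0111}` and
`{0000, 0100, 0011, 0111, 1001, 1010, 1101, 1110}`. -/
theorem AQ4_blocks_classification (Δ : Set (Fin 4 → ZMod 2))
    (hblock : ∀ g : AQ 4 ≃g AQ 4, ⇑g '' Δ = Δ ∨ Disjoint (⇑g '' Δ) Δ)
    (h0 : (![0,0,0,0] : Fin 4 → ZMod 2) ∈ Δ)
    (h1 : 1 < Δ.ncard) (h16 : Δ.ncard < 16) :
    Δ = ({![0,0,0,0], ![0,1,0,0]} : Set (Fin 4 → ZMod 2)) ∨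
    Δ = ({![0,0,0,0], ![0,1,0,0], ![0,0,1,1], ![0,1,1,1]} : Set (Fin 4 → ZMod 2)) ∨
    Δ = ({![0,0,0,0], ![0,1,0,0], ![0,0,1,1], ![0,1,1,1],
          ![1,0,0,1], ![1,0,1,0], ![1,1,0,1], ![1,1,1,0]} : Set (Fin 4 → ZMod 2)) := by
  -- Δ is closed under addition
  have hadd : ∀ a ∈ Δ, ∀ b ∈ Δ, a + b ∈ Δ := by
    intro a ha b hb
    rcases hblock (trAut a) with h | h
    · rw [← h]
      exact ⟨b, hb, by rw [trAut_apply, add_comm]⟩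
    · exact absurd ha (Set.disjoint_left.mp h
        ⟨![0,0,0,0], h0, by
          rw [trAut_apply, show (![0,0,0,0] : V4) = 0 from by decide, zero_add]⟩)
  have sumMem : ∀ a b c : V4, a + b = c → a ∈ Δ → b ∈ Δ → c ∈ Δ :=
    fun a b c h ha hb => h ▸ hadd a ha b hb
  -- Δ is invariant under gAut
  have hIm : ⇑gAut '' Δ = Δ := by
    rcases hblock gAut with h | h
    · exact h
    · exact absurd h0 (Set.disjoint_left.mp h
        ⟨![0,0,0,0], h0, by rw [gAut_apply]; decide⟩)
  have hg : ∀ x : V4, gFun x ∈ Δ ↔ x ∈ Δ := by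
    intro x
    constructor
    · intro hx
      rw [← hIm] at hx
      obtain ⟨z, hz, hze⟩ := hx
      rw [gAut_apply] at hze
      have : z = x := (by decide : Function.Injective gFun) hze
      rwa [← this]
    · intro hx
      rw [← hIm]
      exact ⟨x, hx, gAut_apply x⟩
  have rg : ∀ a b : V4, gFun a = b → (b ∈ Δ ↔ a ∈ Δ) := fun a b h => h ▸ hg a
  -- orbit membership iffs (rep: 1000 for O1, 0011 for O2, 0101 for O4, 1001 for O5)
  have r0001 : (![0,0,0,1] : V4) ∈ Δ ↔ ![1,0,0,0] ∈ Δ := rg _ _ (by decide)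
  have r0010 : (![0,0,1,0] : V4) ∈ Δ ↔ ![1,0,0,0] ∈ Δ := (rg _ _ (by decide : gFun ![0,0,1,0] = ![1,0,0,0])).symm
  have r1111 : (![1,1,1,1] : V4) ∈ Δ ↔ ![1,0,0,0] ∈ Δ :=
    ((rg _ _ (by decide : gFun ![1,1,1,1] = ![0,0,1,0])).symm).trans r0010
  have r0111 : (![0,1,1,1] : V4) ∈ Δ ↔ ![0,0,1,1] ∈ Δ := rg _ _ (by decide)
  have r1011 : (![1,0,1,1] : V4) ∈ Δ ↔ ![0,1,0,1] ∈ Δ := rg _ _ (by decide)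
  have r0110 : (![0,1,1,0] : V4) ∈ Δ ↔ ![0,1,0,1] ∈ Δ := (rg _ _ (by decide : gFun ![1,0,1,1] = ![0,1,1,0])).trans r1011
  have r1100 : (![1,1,0,0] : V4) ∈ Δ ↔ ![0,1,0,1] ∈ Δ := (rg _ _ (by decide : gFun ![0,1,1,0] = ![1,1,0,0])).trans r0110
  have r1010 : (![1,0,1,0] : V4) ∈ Δ ↔ ![1,0,0,1] ∈ Δ := (rg _ _ (by decide : gFun ![1,0,1,0] = ![1,0,0,1])).symm
  have r1110 : (![1,1,1,0] : V4) ∈ Δ ↔ ![1,0,0,1] ∈ Δ := rg _ _ (by decide)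
  have r1101 : (![1,1,0,1] : V4) ∈ Δ ↔ ![1,1,1,0] ∈ Δ := rg _ _ (by decide)
  have r1101' : (![1,1,0,1] : V4) ∈ Δ ↔ ![1,0,0,1] ∈ Δ := r1101.trans r1110
  -- case analysis
  by_cases b1 : (![1,0,0,0] : V4) ∈ Δ
  · -- Δ = univ : contradiction with h16
    exfalso
    have m1111 := r1111.mpr b1
    have m0111 : (![0,1,1,1] : V4) ∈ Δ := sumMem _ _ _ (by decide) b1 m1111
    have m0011 := r0111.mp m0111
    have m0100 : (![0,1,0,0] : V4) ∈ Δ := sumMem _ _ _ (by decide) m0011 m0111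
    have m0001 := r0001.mpr b1
    have m0101 : (![0,1,0,1] : V4) ∈ Δ := sumMem _ _ _ (by decide) m0100 m0001
    have m1001 : (![1,0,0,1] : V4) ∈ Δ := sumMem _ _ _ (by decide) b1 m0001
    have huniv : Δ = Set.univ := Set.eq_univ_of_forall fun x => by
      rcases all16 x with rfl|rfl|rfl|rfl|rfl|rfl|rfl|rfl|rfl|rfl|rfl|rfl|rfl|rfl|rfl|rfl
      exacts [h0, b1, m0100, r0010.mpr b1, m0001, m0011, m0111, m1111, m0101,
        r0110.mpr m0101, r1011.mpr m0101, r1100.mpr m0101, m1001, r1010.mpr m1001,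
        r1101'.mpr m1001, r1110.mpr m1001]
    have hc : Nat.card (Fin 4 → ZMod 2) = 16 := by
      rw [Nat.card_eq_fintype_card]; decide
    rw [huniv, Set.ncard_univ, hc] at h16
    omega
  · by_cases b4 : (![0,1,0,1] : V4) ∈ Δ
    · -- contradiction
      exfalso
      have m0110 := r0110.mpr b4
      have m0011 : (![0,0,1,1] : V4) ∈ Δ := sumMem _ _ _ (by decide) b4 m0110
      have m0111 := r0111.mpr m0011
      have m0100 : (![0,1,0,0] : V4) ∈ Δ := sumMem _ _ _ (by decide) m0011 m0111
      have m0001 : (![0,0,0,1] : V4) ∈ Δ := sumMem _ _ _ (by decide) m0100 b4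
      exact b1 (r0001.mp m0001)
    · by_cases b2 : (![0,0,1,1] : V4) ∈ Δ
      · have m0111 := r0111.mpr b2
        have b3 : (![0,1,0,0] : V4) ∈ Δ := sumMem _ _ _ (by decide) b2 m0111
        by_cases b5 : (![1,0,0,1] : V4) ∈ Δ
        · -- third option
          refine Or.inr (Or.inr ?_)
          ext x
          simp only [Set.mem_insert_iff, Set.mem_singleton_iff]
          constructor
          · intro hx
            rcases all16 x with rfl|rfl|rfl|rfl|rfl|rfl|rfl|rfl|rfl|rfl|rfl|rfl|rfl|rfl|rfl|rfl
            · exact Or.inl rfl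
            · exact absurd hx b1
            · exact Or.inr (Or.inl rfl)
            · exact absurd (r0010.mp hx) b1
            · exact absurd (r0001.mp hx) b1
            · exact Or.inr (Or.inr (Or.inl rfl))
            · exact Or.inr (Or.inr (Or.inr (Or.inl rfl)))
            · exact absurd (r1111.mp hx) b1
            · exact absurd hx b4
            · exact absurd (r0110.mp hx) b4
            · exact absurd (r1011.mp hx) b4
            · exact absurd (r1100.mp hx) b4
            · exact Or.inr (Or.inr (Or.inr (Or.inr (Or.inl rfl))))
            · exact Or.inr (Or.inr (Or.inr (Or.inr (Or.inr (Or.inl rfl)))))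
            · exact Or.inr (Or.inr (Or.inr (Or.inr (Or.inr (Or.inr (Or.inl rfl))))))
            · exact Or.inr (Or.inr (Or.inr (Or.inr (Or.inr (Or.inr (Or.inr rfl))))))
          · rintro (rfl|rfl|rfl|rfl|rfl|rfl|rfl|rfl)
            exacts [h0, b3, b2, m0111, b5, r1010.mpr b5, r1101'.mpr b5, r1110.mpr b5]
        · -- second option
          refine Or.inr (Or.inl ?_)
          ext x
          simp only [Set.mem_insert_iff, Set.mem_singleton_iff]
          constructor
          · intro hx
            rcases all16 x with rfl|rfl|rfl|rfl|rfl|rfl|rfl|rfl|rfl|rfl|rfl|rfl|rfl|rfl|rfl|rfl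
            · exact Or.inl rfl
            · exact absurd hx b1
            · exact Or.inr (Or.inl rfl)
            · exact absurd (r0010.mp hx) b1
            · exact absurd (r0001.mp hx) b1
            · exact Or.inr (Or.inr (Or.inl rfl))
            · exact Or.inr (Or.inr (Or.inr rfl))
            · exact absurd (r1111.mp hx) b1
            · exact absurd hx b4
            · exact absurd (r0110.mp hx) b4
            · exact absurd (r1011.mp hx) b4
            · exact absurd (r1100.mp hx) b4
            · exact absurd hx b5
            · exact absurd (r1010.mp hx) b5
            · exact absurd (r1101'.mp hx) b5
            · exact absurd (r1110.mp hx) b5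
          · rintro (rfl|rfl|rfl|rfl)
            exacts [h0, b3, b2, m0111]
      · by_cases b5 : (![1,0,0,1] : V4) ∈ Δ
        · -- contradiction: 1001 + 1010 = 0011
          exfalso
          have m1010 := r1010.mpr b5
          exact b2 (sumMem _ _ _ (by decide) b5 m1010)
        · by_cases b3 : (![0,1,0,0] : V4) ∈ Δ
          · -- first option
            refine Or.inl ?_
            ext x
            simp only [Set.mem_insert_iff, Set.mem_singleton_iff]
            constructor
            · intro hx
              rcases all16 x with rfl|rfl|rfl|rfl|rfl|rfl|rfl|rfl|rfl|rfl|rfl|rfl|rfl|rfl|rfl|rfl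
              · exact Or.inl rfl
              · exact absurd hx b1
              · exact Or.inr rfl
              · exact absurd (r0010.mp hx) b1
              · exact absurd (r0001.mp hx) b1
              · exact absurd hx b2
              · exact absurd (r0111.mp hx) b2
              · exact absurd (r1111.mp hx) b1
              · exact absurd hx b4
              · exact absurd (r0110.mp hx) b4
              · exact absurd (r1011.mp hx) b4
              · exact absurd (r1100.mp hx) b4
              · exact absurd hx b5
              · exact absurd (r1010.mp hx) b5
              · exact absurd (r1101'.mp hx) b5
              · exact absurd (r1110.mp hx) b5
            · rintro (rfl|rfl)
              exacts [h0, b3]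
          · -- Δ = {0}, contradiction with h1
            exfalso
            have hsing : Δ = {![0,0,0,0]} := by
              ext x
              simp only [Set.mem_singleton_iff]
              constructor
              · intro hx
                rcases all16 x with rfl|rfl|rfl|rfl|rfl|rfl|rfl|rfl|rfl|rfl|rfl|rfl|rfl|rfl|rfl|rfl
                · rfl
                · exact absurd hx b1
                · exact absurd hx b3
                · exact absurd (r0010.mp hx) b1
                · exact absurd (r0001.mp hx) b1
                · exact absurd hx b2
                · exact absurd (r0111.mp hx) b2
                · exact absurd (r1111.mp hx) b1
                · exact absurd hx b4
                · exact absurd (r0110.mp hx) b4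
                · exact absurd (r1011.mp hx) b4
                · exact absurd (r1100.mp hx) b4
                · exact absurd hx b5
                · exact absurd (r1010.mp hx) b5
                · exact absurd (r1101'.mp hx) b5
                · exact absurd (r1110.mp hx) b5
              · rintro rfl; exact h0
            rw [hsing, Set.ncard_singleton] at h1
            omega
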